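/- Let V : ℝ → ℝ be a C² solution of V'' = V(V² + x) on ℝ with V > 0, V(x) - √(-x) → 0 as x → -∞, and V(x) → 0 as x → +∞. Then ∫_{-∞}^0 (V²(x) + x) dx + ∫_0^∞ V²(x) dx = 0, where both improper integrals converge absolutely (assuming V(x) - √(-x) = O(|x|^{-5/2}) as x → -∞ and V decays superexponentially as x → +∞). -/

import Mathlib

open Filter MeasureTheory

section AuxLemmas

private lemma myflip {f : ℝ → ℝ} {a : ℝ} (h : IntegrableOn (fun x => f (-x)) (Set.Ici (-a))) :
    IntegrableOn f (Set.Iic a) := by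
  have := (MeasurePreserving.integrableOn_comp_preimage
    (Measure.measurePreserving_neg (volume : Measure ℝ))
    (Homeomorph.neg ℝ).measurableEmbedding).2 h
  simpa [Function.comp_def] using this

private lemma myrpow_int {b : ℝ} (hb : b ≤ -1) {s : ℝ} (hs : s < -1) :
    IntegrableOn (fun x : ℝ => |x| ^ s) (Set.Iic b) := by
  apply myflip
  have h0 : (0:ℝ) < -b := by linarith
  have h1 : IntegrableOn (fun x : ℝ => x ^ s) (Set.Ioi (-b)) :=
    integrableOn_Ioi_rpow_of_lt hs h0
  have h2 : IntegrableOn (fun x : ℝ => x ^ s) (Set.Ici (-b)) := by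
    rwa [integrableOn_Ici_iff_integrableOn_Ioi]
  apply h2.congr_fun _ measurableSet_Ici
  intro x hx
  simp only [Set.mem_Ici] at hx
  show x ^ s = |(-x)| ^ s
  rw [abs_neg, abs_of_pos (by linarith)]

private lemma mysqrtlin {k t : ℝ} (hk : 0 < k) (ht : 0 ≤ t) :
    Real.sqrt t ≤ (k/2)*t + 1/k := by
  have hs := Real.sq_sqrt ht
  have hs0 : 0 ≤ Real.sqrt t := Real.sqrt_nonneg t
  have h2 : Real.sqrt t ≤ (k/2)*(Real.sqrt t)^2 + 1/k := by
    rw [← sub_nonneg]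
    have h3 : (k/2)*(Real.sqrt t)^2 + 1/k - Real.sqrt t
        = (k*Real.sqrt t - 1)^2/(2*k) + 1/(2*k) := by
      field_simp; ring
    rw [h3]; positivity
  rwa [hs] at h2

private lemma sq_limit_lb {f : ℝ → ℝ} {k b : ℝ} (h2 : k^2 ≤ (f b)^2) (hk : 0 ≤ k) :
    k ≤ |f b| := by
  rw [← Real.sqrt_sq hk, ← Real.sqrt_sq_eq_abs]
  exact Real.sqrt_le_sqrt h2

private lemma top_aux (V : ℝ → ℝ) (hd : Differentiable ℝ V) (hc : Continuous (deriv V))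
    (hpos : ∀ x, 0 < V x) (htop : Tendsto V atTop (nhds 0)) {l : ℝ} (hl : 0 < l)
    (h : Tendsto (fun b => (deriv V b)^2) atTop (nhds l)) : False := by
  obtain ⟨M, hM⟩ := eventually_atTop.mp (h.eventually (eventually_ge_nhds (by linarith : l/2 < l)))
  set k := Real.sqrt (l/2) with hkdef
  have hk : 0 < k := Real.sqrt_pos.2 (by linarith)
  have hk2 : k^2 = l/2 := Real.sq_sqrt (by linarith)
  have hne : ∀ b ≥ M, deriv V b ≠ 0 := by
    intro b hb h0
    have := hM b hb; rw [h0] at this; norm_num at this; linarith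
  have habs : ∀ b ≥ M, k ≤ |deriv V b| := fun b hb =>
    sq_limit_lb (hk2 ▸ hM b hb) hk.le
  have hftc : ∀ b ≥ M, ∫ y in M..b, deriv V y = V b - V M := fun b _ =>
    intervalIntegral.integral_deriv_eq_sub (fun x _ => hd x) (hc.intervalIntegrable _ _)
  rcases lt_or_gt_of_ne (hne M le_rfl) with hneg | hposM
  · have hsign : ∀ b ≥ M, deriv V b < 0 := by
      intro b hb
      rcases lt_or_gt_of_ne (hne b hb) with h' | h'
      · exact h'
      · exfalso
        obtain ⟨z, hzmem, hz0⟩ := intermediate_value_Icc hb hc.continuousOn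
          (by constructor <;> [exact hneg.le; exact h'.le] : (0:ℝ) ∈ Set.Icc (deriv V M) (deriv V b))
        exact hne z hzmem.1 hz0
    have hle : ∀ b ≥ M, deriv V b ≤ -k := by
      intro b hb
      have := habs b hb
      rw [abs_of_neg (hsign b hb)] at this; linarith
    have key : ∀ b ≥ M, V b ≤ V M - k * (b - M) := by
      intro b hb
      have hmono : ∫ y in M..b, deriv V y ≤ ∫ y in M..b, (-k) :=
        intervalIntegral.integral_mono_on hb (hc.intervalIntegrable _ _)
          intervalIntegrable_const (fun x hx => hle x hx.1)
      rw [hftc b hb, intervalIntegral.integral_const, smul_eq_mul] at hmono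
      linarith
    have hb : M ≤ M + V M / k + 1 := by
      have : 0 < V M / k := div_pos (hpos M) hk
      linarith
    have := key _ hb
    have h2 : k * (M + V M / k + 1 - M) = V M + k := by field_simp; ring
    rw [h2] at this
    linarith [hpos (M + V M / k + 1)]
  · have hsign : ∀ b ≥ M, 0 < deriv V b := by
      intro b hb
      rcases lt_or_gt_of_ne (hne b hb) with h' | h'
      · exfalso
        obtain ⟨z, hzmem, hz0⟩ := intermediate_value_Icc' hb hc.continuousOn
          (by constructor <;> [exact h'.le; exact hposM.le] : (0:ℝ) ∈ Set.Icc (deriv V b) (deriv V M))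
        exact hne z hzmem.1 hz0
      · exact h'
    have hge : ∀ b ≥ M, k ≤ deriv V b := by
      intro b hb
      have := habs b hb
      rw [abs_of_pos (hsign b hb)] at this; linarith
    have key : ∀ b ≥ M, V M + k * (b - M) ≤ V b := by
      intro b hb
      have hmono : ∫ y in M..b, (k:ℝ) ≤ ∫ y in M..b, deriv V y :=
        intervalIntegral.integral_mono_on hb intervalIntegrable_const
          (hc.intervalIntegrable _ _) (fun x hx => hge x hx.1)
      rw [hftc b hb, intervalIntegral.integral_const, smul_eq_mul] at hmono
      linarith
    obtain ⟨b, hb1, hb2⟩ := ((htop.eventually (eventually_lt_nhds hk)).and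
      (eventually_ge_atTop (M+1))).exists
    have := key b (by linarith)
    have : V M + k * 1 ≤ V b := by nlinarith [hpos M]
    linarith [hpos M]

private lemma bot_aux (V : ℝ → ℝ) (hd : Differentiable ℝ V) (hc : Continuous (deriv V))
    (hpos : ∀ x, 0 < V x)
    (hbot : Tendsto (fun x => V x - Real.sqrt (-x)) atBot (nhds 0)) {m : ℝ} (hm : 0 < m)
    (h : Tendsto (fun a => (deriv V a)^2) atBot (nhds m)) : False := by
  obtain ⟨M, hM⟩ := eventually_atBot.mp (h.eventually (eventually_ge_nhds (by linarith : m/2 < m)))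
  set k := Real.sqrt (m/2) with hkdef
  have hk : 0 < k := Real.sqrt_pos.2 (by linarith)
  have hk2 : k^2 = m/2 := Real.sq_sqrt (by linarith)
  have hne : ∀ a ≤ M, deriv V a ≠ 0 := by
    intro a ha h0
    have := hM a ha; rw [h0] at this; norm_num at this; linarith
  have habs : ∀ a ≤ M, k ≤ |deriv V a| := fun a ha =>
    sq_limit_lb (hk2 ▸ hM a ha) hk.le
  have hftc : ∀ a ≤ M, ∫ y in a..M, deriv V y = V M - V a := fun a _ =>
    intervalIntegral.integral_deriv_eq_sub (fun x _ => hd x) (hc.intervalIntegrable _ _)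
  rcases lt_or_gt_of_ne (hne M le_rfl) with hneg | hposM
  · have hsign : ∀ a ≤ M, deriv V a < 0 := by
      intro a ha
      rcases lt_or_gt_of_ne (hne a ha) with h' | h'
      · exact h'
      · exfalso
        obtain ⟨z, hzmem, hz0⟩ := intermediate_value_Icc' ha hc.continuousOn
          (by constructor <;> [exact hneg.le; exact h'.le] : (0:ℝ) ∈ Set.Icc (deriv V M) (deriv V a))
        exact hne z (hzmem.2) hz0
    have hle : ∀ a ≤ M, deriv V a ≤ -k := by
      intro a ha
      have := habs a ha
      rw [abs_of_neg (hsign a ha)] at this; linarith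
    have key : ∀ a ≤ M, V M + k * (M - a) ≤ V a := by
      intro a ha
      have hmono : ∫ y in a..M, deriv V y ≤ ∫ y in a..M, (-k) :=
        intervalIntegral.integral_mono_on ha (hc.intervalIntegrable _ _)
          intervalIntegrable_const (fun x hx => hle x hx.2)
      rw [hftc a ha, intervalIntegral.integral_const, smul_eq_mul] at hmono
      linarith
    have hev1 : ∀ᶠ a in atBot, V a - Real.sqrt (-a) < 1 :=
      hbot.eventually (eventually_lt_nhds one_pos)
    have hgrow : Tendsto (fun a : ℝ => (k/2) * (-a)) atBot atTop := by
      apply Tendsto.const_mul_atTop (by positivity)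
      exact tendsto_neg_atBot_atTop
    have hev2 : ∀ᶠ a in atBot, (1/k + 1 - V M - k*M) ≤ (k/2) * (-a) :=
      hgrow.eventually_ge_atTop _
    obtain ⟨a, ha1, ha2, ha3, ha4⟩ :=
      (hev1.and (hev2.and ((eventually_le_atBot M).and (eventually_le_atBot (0:ℝ))))).exists
    have hsq : Real.sqrt (-a) ≤ (k/2)*(-a) + 1/k := mysqrtlin hk (by linarith)
    have hkey := key a ha3
    have h1 : k * (M - a) = k*M + 2*((k/2)*(-a)) := by ring
    linarith
  · have hsign : ∀ a ≤ M, 0 < deriv V a := by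
      intro a ha
      rcases lt_or_gt_of_ne (hne a ha) with h' | h'
      · exfalso
        obtain ⟨z, hzmem, hz0⟩ := intermediate_value_Icc ha hc.continuousOn
          (by constructor <;> [exact h'.le; exact hposM.le] : (0:ℝ) ∈ Set.Icc (deriv V a) (deriv V M))
        exact hne z hzmem.2 hz0
      · exact h'
    have hge : ∀ a ≤ M, k ≤ deriv V a := by
      intro a ha
      have := habs a ha
      rw [abs_of_pos (hsign a ha)] at this; linarith
    have key : ∀ a ≤ M, V a ≤ V M - k * (M - a) := by
      intro a ha
      have hmono : ∫ y in a..M, (k:ℝ) ≤ ∫ y in a..M, deriv V y :=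
        intervalIntegral.integral_mono_on ha intervalIntegrable_const
          (hc.intervalIntegrable _ _) (fun x hx => hge x hx.2)
      rw [hftc a ha, intervalIntegral.integral_const, smul_eq_mul] at hmono
      linarith
    have ha : M - V M / k - 1 ≤ M := by
      have : 0 < V M / k := div_pos (hpos M) hk
      linarith
    have := key _ ha
    have h2 : k * (M - (M - V M / k - 1)) = V M + k := by field_simp; ring
    rw [h2] at this
    linarith [hpos (M - V M / k - 1)]

end AuxLemmas

set_option maxHeartbeats 2000000 in
/-- For the Hastings–McLeod solution `V` of Painlevé-II,
`∫_{-∞}^0 (V² + x) dx + ∫_0^∞ V² dx = 0`, both integrals being absolutely convergent. -/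
theorem stmt1 (V : ℝ → ℝ)
    (hV : ContDiff ℝ 2 V)
    (heq : ∀ x, deriv (deriv V) x = V x * (V x ^ 2 + x))
    (hpos : ∀ x, 0 < V x)
    (hbot : Tendsto (fun x => V x - Real.sqrt (-x)) atBot (nhds 0))
    (htop : Tendsto V atTop (nhds 0))
    (hO : ∃ C > (0:ℝ), ∃ X : ℝ, ∀ x ≤ X, |V x - Real.sqrt (-x)| ≤ C * |x| ^ (-(5:ℝ)/2))
    (hsup : ∃ c > (0:ℝ), ∃ C > (0:ℝ), ∀ x ≥ (0:ℝ), V x ≤ C * Real.exp (-c * x ^ ((3:ℝ)/2))) :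
    IntegrableOn (fun x => V x ^ 2 + x) (Set.Iic 0) ∧
    IntegrableOn (fun x => V x ^ 2) (Set.Ici 0) ∧
    (∫ x in Set.Iic (0:ℝ), (V x ^ 2 + x)) + (∫ x in Set.Ici (0:ℝ), V x ^ 2) = 0 := by
  obtain ⟨C, hC, X, hX⟩ := hO
  obtain ⟨c, hc, C₂, hC₂, hsup'⟩ := hsup
  -- regularity
  have h11 : ContDiff ℝ (1+1) V := by norm_num; exact hV
  have h1 : ContDiff ℝ 1 (deriv V) := (contDiff_succ_iff_deriv.mp h11).2.2
  have hd1 : Differentiable ℝ V := hV.differentiable (by norm_num)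
  have hd2 : Differentiable ℝ (deriv V) := h1.differentiable (by norm_num)
  have hcV' : Continuous (deriv V) := h1.continuous
  have hcont2 : Continuous (fun x => V x ^ 2) := hd1.continuous.pow 2
  have hcont1 : Continuous (fun x => V x ^ 2 + x) := hcont2.add continuous_id
  -- the bound near -∞
  set X₁ := min X (-1) with hX₁def
  have hX₁ : X₁ ≤ -1 := min_le_right _ _
  have hbd1 : ∀ x ≤ X₁, |V x ^ 2 + x| ≤ (C*(2+C)) * |x| ^ (-(2:ℝ)) := by
    intro x hx
    have hx1 : x ≤ -1 := le_trans hx hX₁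
    have hxX : x ≤ X := le_trans hx (min_le_left _ _)
    have hxneg : x < 0 := by linarith
    have habs : |x| = -x := abs_of_neg hxneg
    have habs1 : (1:ℝ) ≤ |x| := by rw [habs]; linarith
    set s := Real.sqrt (-x) with hsdef
    have hs2 : s^2 = -x := Real.sq_sqrt (by linarith)
    have hs1 : 1 ≤ s := by
      rw [show (1:ℝ) = Real.sqrt 1 by simp]
      exact Real.sqrt_le_sqrt (by linarith)
    have h52 : |x| ^ (-(5:ℝ)/2) ≤ 1 :=
      Real.rpow_le_one_of_one_le_of_nonpos habs1 (by norm_num)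
    have hVx : |V x - s| ≤ C * |x| ^ (-(5:ℝ)/2) := hX x hxX
    have hfact : V x ^ 2 + x = (V x - s) * (V x + s) := by nlinarith [hs2]
    have hsum : |V x + s| ≤ (2+C) * s := by
      rw [abs_of_pos (add_pos (hpos x) (lt_of_lt_of_le one_pos hs1))]
      have h1' : V x ≤ s + C * |x| ^ (-(5:ℝ)/2) := by
        have := abs_le.mp hVx
        linarith [this.2]
      have h2 : C * |x| ^ (-(5:ℝ)/2) ≤ C := by nlinarith
      nlinarith
    have hsrw : s = |x| ^ ((1:ℝ)/2) := by
      rw [hsdef, ← habs, Real.sqrt_eq_rpow]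
    calc |V x ^ 2 + x| = |V x - s| * |V x + s| := by rw [hfact, abs_mul]
      _ ≤ (C * |x| ^ (-(5:ℝ)/2)) * ((2+C) * s) := by
          apply mul_le_mul hVx hsum (abs_nonneg _) (by positivity)
      _ = (C*(2+C)) * (|x| ^ (-(5:ℝ)/2) * |x| ^ ((1:ℝ)/2)) := by rw [hsrw]; ring
      _ = (C*(2+C)) * |x| ^ (-(2:ℝ)) := by
          rw [← Real.rpow_add (by linarith : (0:ℝ) < |x|)]
          norm_num
  -- integrability on Iic 0
  have hIic : IntegrableOn (fun x => V x ^ 2 + x) (Set.Iic 0) := by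
    have hsplit : Set.Iic (0:ℝ) = Set.Iic X₁ ∪ Set.Icc X₁ 0 := by
      rw [Set.Iic_union_Icc_eq_Iic (by linarith)]
    rw [hsplit]
    apply IntegrableOn.union
    · apply Integrable.mono' ((myrpow_int hX₁ (s := -(2:ℝ)) (by norm_num)).const_mul (C*(2+C)))
      · exact hcont1.aestronglyMeasurable.restrict
      · refine (ae_restrict_iff' measurableSet_Iic).2 (ae_of_all _ fun x hx => ?_)
        simpa using hbd1 x hx
    · exact hcont1.integrableOn_Icc
  -- the bound near +∞
  have hbd2 : ∀ x ≥ (1:ℝ), |V x ^ 2| ≤ C₂^2 * Real.exp (-c * x) := by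
    intro x hx
    have h0 : (0:ℝ) ≤ x := by linarith
    have hVx := hsup' x h0
    have hrp : x ≤ x ^ ((3:ℝ)/2) := by
      nth_rewrite 1 [show x = x ^ (1:ℝ) by rw [Real.rpow_one]]
      exact Real.rpow_le_rpow_of_exponent_le hx (by norm_num)
    have hexp : Real.exp (-c * x ^ ((3:ℝ)/2)) ≤ Real.exp (-c * x) := by
      apply Real.exp_le_exp.2; nlinarith
    have hexp1 : Real.exp (-c * x ^ ((3:ℝ)/2)) ≤ 1 := by
      apply Real.exp_le_one_iff.2; nlinarith [Real.rpow_nonneg h0 ((3:ℝ)/2)]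
    have hV0 := (hpos x).le
    rw [abs_of_nonneg (by positivity)]
    calc V x ^ 2 ≤ (C₂ * Real.exp (-c * x ^ ((3:ℝ)/2)))^2 := by nlinarith
      _ ≤ C₂^2 * Real.exp (-c * x) := by
          have hm := mul_le_mul hexp1 hexp (Real.exp_pos _).le zero_le_one
          nlinarith [sq_nonneg C₂]
  -- integrability on Ici 0
  have hIci : IntegrableOn (fun x => V x ^ 2) (Set.Ici 0) := by
    have hsplit : Set.Ici (0:ℝ) = Set.Icc 0 1 ∪ Set.Ioi 1 := by
      rw [Set.Icc_union_Ioi_eq_Ici (by norm_num)]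
    rw [hsplit]
    apply IntegrableOn.union
    · exact hcont2.integrableOn_Icc
    · apply Integrable.mono' ((exp_neg_integrableOn_Ioi 1 hc).const_mul (C₂^2))
      · exact hcont2.aestronglyMeasurable.restrict
      · refine (ae_restrict_iff' measurableSet_Ioi).2 (ae_of_all _ fun x hx => ?_)
        simpa using hbd2 x (le_of_lt hx)
  refine ⟨hIic, hIci, ?_⟩
  -- the conserved quantities
  set F : ℝ → ℝ := fun y => (deriv V y)^2 - (1/2)*(V y ^ 2 + y)^2 with hFdef
  set G : ℝ → ℝ := fun y => (deriv V y)^2 - (1/2)*(V y)^4 - y*(V y)^2 with hGdef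
  have hFd : ∀ x, HasDerivAt F (-(V x ^ 2 + x)) x := by
    intro x
    have h1' : HasDerivAt (deriv V) (V x * (V x ^ 2 + x)) x := by
      have := (hd2 x).hasDerivAt; rwa [heq x] at this
    have h2 : HasDerivAt V (deriv V x) x := (hd1 x).hasDerivAt
    have h3 : HasDerivAt (fun y => V y ^ 2 + y) (2 * V x * deriv V x + 1) x := by
      have := ((h2.pow 2).add (hasDerivAt_id x))
      exact this.congr_deriv (by push_cast; ring)
    have h5 := (h1'.pow 2).sub ((h3.pow 2).const_mul ((1:ℝ)/2))
    exact h5.congr_deriv (by push_cast; ring)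
  have hGd : ∀ x, HasDerivAt G (-(V x)^2) x := by
    intro x
    have h1' : HasDerivAt (deriv V) (V x * (V x ^ 2 + x)) x := by
      have := (hd2 x).hasDerivAt; rwa [heq x] at this
    have h2 : HasDerivAt V (deriv V x) x := (hd1 x).hasDerivAt
    have h5 := ((h1'.pow 2).sub ((h2.pow 4).const_mul ((1:ℝ)/2))).sub
      ((hasDerivAt_id x).mul (h2.pow 2))
    exact h5.congr_deriv (by push_cast [id_eq, Pi.pow_apply]; ring)
  -- fundamental theorem of calculus
  have hFTC1 : ∀ a : ℝ, ∫ x in a..(0:ℝ), (V x ^ 2 + x) = F a - F 0 := by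
    intro a
    have h := intervalIntegral.integral_eq_sub_of_hasDerivAt (f := F)
      (f' := fun x => -(V x ^ 2 + x)) (fun x _ => hFd x) ((hcont1.neg).intervalIntegrable a 0)
    rw [intervalIntegral.integral_neg] at h
    linarith
  have hFTC2 : ∀ b : ℝ, ∫ x in (0:ℝ)..b, (V x ^ 2) = G 0 - G b := by
    intro b
    have h := intervalIntegral.integral_eq_sub_of_hasDerivAt (f := G)
      (f' := fun x => -(V x)^2) (fun x _ => hGd x) ((hcont2.neg).intervalIntegrable 0 b)
    have h2 : ∫ x in (0:ℝ)..b, -(V x)^2 = -∫ x in (0:ℝ)..b, (V x ^ 2) := by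
      rw [← intervalIntegral.integral_neg]
    rw [h2] at h
    linarith
  -- limits at -∞
  set A := ∫ x in Set.Iic (0:ℝ), (V x ^ 2 + x) with hAdef
  have hA : Tendsto (fun a => ∫ x in a..(0:ℝ), (V x ^ 2 + x)) atBot (nhds A) :=
    intervalIntegral_tendsto_integral_Iic 0 hIic tendsto_id
  have hFlim : Tendsto F atBot (nhds (A + F 0)) := by
    have := hA.add_const (F 0)
    exact this.congr (fun a => by rw [hFTC1 a]; ring)
  have hsq0 : Tendsto (fun a => V a ^ 2 + a) atBot (nhds 0) := by
    apply squeeze_zero_norm' (a := fun x : ℝ => (C*(2+C)) * |x| ^ (-(2:ℝ)))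
    · filter_upwards [eventually_le_atBot X₁] with x hx
      simpa using hbd1 x hx
    · rw [show (0:ℝ) = (C*(2+C)) * 0 by ring]
      apply Tendsto.const_mul
      exact (tendsto_rpow_neg_atTop two_pos).comp tendsto_abs_atBot_atTop
  have hV'sq_bot : Tendsto (fun a => (deriv V a)^2) atBot (nhds (A + F 0)) := by
    have h2 := (hsq0.pow 2).const_mul ((1:ℝ)/2)
    have h4 : Tendsto (fun a => F a + (1/2)*(V a ^ 2 + a)^2) atBot (nhds (A + F 0)) := by
      simpa using hFlim.add h2
    exact h4.congr fun a => by simp only [hFdef]; ring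
  have hm0 : 0 ≤ A + F 0 := ge_of_tendsto' hV'sq_bot (fun a => sq_nonneg _)
  have hAeq : A = -F 0 := by
    rcases eq_or_lt_of_le hm0 with he | hlt
    · linarith
    · exact absurd hV'sq_bot (fun h => bot_aux V hd1 hcV' hpos hbot hlt h)
  -- limits at +∞
  set B := ∫ x in Set.Ici (0:ℝ), V x ^ 2 with hBdef
  have hB : Tendsto (fun b => ∫ x in (0:ℝ)..b, V x ^ 2) atTop (nhds B) := by
    rw [hBdef, integral_Ici_eq_integral_Ioi]
    exact intervalIntegral_tendsto_integral_Ioi 0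
      (hIci.mono_set Set.Ioi_subset_Ici_self) tendsto_id
  have hGlim : Tendsto G atTop (nhds (G 0 - B)) := by
    have := (tendsto_const_nhds (x := G 0) (f := atTop)).sub hB
    exact this.congr (fun b => by rw [hFTC2 b]; ring)
  have hbV2 : Tendsto (fun b => b * V b ^ 2) atTop (nhds 0) := by
    apply squeeze_zero_norm' (a := fun b => (C₂^2/c) * Real.exp (-c * b))
    · filter_upwards [eventually_ge_atTop (1:ℝ)] with b hb
      have h0 : (0:ℝ) ≤ b := by linarith
      have hVb := hsup' b h0
      have hrp : b ≤ b ^ ((3:ℝ)/2) := by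
        nth_rewrite 1 [show b = b ^ (1:ℝ) by rw [Real.rpow_one]]
        exact Real.rpow_le_rpow_of_exponent_le hb (by norm_num)
      set E := Real.exp (-c * b) with hEdef
      have hE : 0 < E := Real.exp_pos _
      have hVE : V b ≤ C₂ * E := by
        calc V b ≤ C₂ * Real.exp (-c * b ^ ((3:ℝ)/2)) := hVb
          _ ≤ C₂ * E := by
              apply mul_le_mul_of_nonneg_left _ hC₂.le
              apply Real.exp_le_exp.2; nlinarith
      have hbE : b * E ≤ 1/c := by
        have h1' : c * b ≤ Real.exp (c * b) := by
          linarith [Real.add_one_le_exp (c*b)]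
        have h2 : Real.exp (c*b) * E = 1 := by
          rw [hEdef, ← Real.exp_add]; ring_nf; exact Real.exp_zero
        calc b * E = (c * b) * E / c := by field_simp
          _ ≤ Real.exp (c*b) * E / c := by gcongr
          _ = 1/c := by rw [h2]
      have hV0 := (hpos b).le
      rw [Real.norm_eq_abs, abs_of_nonneg (by positivity)]
      calc b * V b ^ 2 ≤ b * (C₂*E)^2 := by
            have h := mul_le_mul hVE hVE hV0 (by positivity : (0:ℝ) ≤ C₂*E)
            nlinarith
        _ = C₂^2 * E * (b * E) := by ring
        _ ≤ C₂^2 * E * (1/c) := mul_le_mul_of_nonneg_left hbE (by positivity)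
        _ = (C₂^2/c) * E := by ring
    · rw [show (0:ℝ) = (C₂^2/c) * 0 by ring]
      apply Tendsto.const_mul
      have hlin : Tendsto (fun b : ℝ => -(c * b)) atTop atBot :=
        tendsto_neg_atTop_atBot.comp (Tendsto.const_mul_atTop hc tendsto_id)
      have h5 := Real.tendsto_exp_atBot.comp hlin
      exact h5.congr fun b => by simp [Function.comp, neg_mul]
  have hV4 : Tendsto (fun b => (V b)^4) atTop (nhds 0) := by
    have := htop.pow 4
    simpa using this
  have hV'sq_top : Tendsto (fun b => (deriv V b)^2) atTop (nhds (G 0 - B)) := by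
    have h2 := hV4.const_mul ((1:ℝ)/2)
    have h4 : Tendsto (fun b => G b + (1/2)*(V b)^4 + b * V b ^ 2) atTop (nhds (G 0 - B)) := by
      simpa using (hGlim.add h2).add hbV2
    exact h4.congr fun b => by simp only [hGdef]; ring
  have hl0 : 0 ≤ G 0 - B := ge_of_tendsto' hV'sq_top (fun b => sq_nonneg _)
  have hBeq : B = G 0 := by
    rcases eq_or_lt_of_le hl0 with he | hlt
    · linarith
    · exact absurd hV'sq_top (fun h => top_aux V hd1 hcV' hpos htop hlt h)
  rw [hAeq, hBeq]
  simp only [hFdef, hGdef]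
  ring
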